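/- With the notation above, for m ≥ n one has P(Ñ_n > 0, Ñ_m = 0) = f'(1 - θ(m-1)) - f'(1 - θ(n-1)) ≥ (θ(n-1) - θ(m-1)) · f''(1 - θ(n-1)). -/

import Mathlib

open MeasureTheory

/-- For `m ≥ n ≥ 1`, the branching process `Nt` with size-biased first generation
(with absorption at `0` and one-dimensional marginals `P(Nt_k = 0) = f'(f_{k-1}(0))`)
satisfies `P(Nt_n > 0, Nt_m = 0) = f'(1-θ(m-1)) - f'(1-θ(n-1))
≥ (θ(n-1) - θ(m-1)) f''(1-θ(n-1))`, where `θ(k) = 1 - f_k(0)`. -/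
theorem stmt11 {Ω : Type*} [MeasurableSpace Ω] (μ : Measure Ω) [IsProbabilityMeasure μ]
    (p : ℕ → ℝ) (hp : ∀ k, 0 ≤ p k)
    (hsum : ∑' k : ℕ, p k = 1) (hmean : ∑' k : ℕ, (k : ℝ) * p k = 1)
    (hthird : Summable fun k : ℕ => (k : ℝ) ^ 3 * p k)
    (f : ℝ → ℝ) (hf : ∀ s, f s = ∑' k : ℕ, p k * s ^ k)
    (θ : ℕ → ℝ) (hθ : ∀ k, θ k = 1 - f^[k] 0)
    (Nt : ℕ → Ω → ℕ) (hmeas : ∀ k, Measurable (Nt k))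
    (habs : ∀ ω (k l : ℕ), k ≤ l → Nt k ω = 0 → Nt l ω = 0)
    (hlaw : ∀ k, 1 ≤ k → μ {ω | Nt k ω = 0} = ENNReal.ofReal (deriv f (f^[k - 1] 0)))
    (n m : ℕ) (hn : 1 ≤ n) (hm : n ≤ m) :
    (μ {ω | Nt n ω ≠ 0 ∧ Nt m ω = 0}).toReal
        = deriv f (1 - θ (m - 1)) - deriv f (1 - θ (n - 1)) ∧
    (θ (n - 1) - θ (m - 1)) * iteratedDeriv 2 f (1 - θ (n - 1))
        ≤ deriv f (1 - θ (m - 1)) - deriv f (1 - θ (n - 1)) := by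
  -- basic summability
  have hpS : Summable p := by
    by_contra hs; rw [tsum_eq_zero_of_not_summable hs] at hsum; norm_num at hsum
  have hmS : Summable (fun k : ℕ => (k : ℝ) * p k) := by
    by_contra hs; rw [tsum_eq_zero_of_not_summable hs] at hmean; norm_num at hmean
  have hfF : f = fun s => ∑' k : ℕ, p k * s ^ k := funext hf
  -- the formal first and second derivatives
  set g : ℝ → ℝ := fun x => ∑' k : ℕ, p k * ((k : ℝ) * x ^ (k - 1)) with hgdef
  set h2 : ℝ → ℝ := fun x => ∑' k : ℕ,
      p k * ((k : ℝ) * (((k - 1 : ℕ) : ℝ) * x ^ (k - 1 - 1))) with hh2def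
  -- norm bounds for the termwise derivatives
  have hbound1 : ∀ (k : ℕ) (y : ℝ), |y| ≤ 1 →
      ‖p k * ((k : ℝ) * y ^ (k - 1))‖ ≤ (k : ℝ) * p k := by
    intro k y hy
    have h1 : |y| ^ (k - 1) ≤ 1 := pow_le_one₀ (abs_nonneg y) hy
    have h2 : (0:ℝ) ≤ |y| ^ (k - 1) := pow_nonneg (abs_nonneg y) _
    rw [Real.norm_eq_abs, abs_mul, abs_mul, abs_pow, abs_of_nonneg (hp k),
      abs_of_nonneg (Nat.cast_nonneg k)]
    calc p k * ((k : ℝ) * |y| ^ (k - 1))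
        ≤ p k * ((k : ℝ) * 1) :=
          mul_le_mul_of_nonneg_left
            (mul_le_mul_of_nonneg_left h1 (Nat.cast_nonneg k)) (hp k)
      _ = (k : ℝ) * p k := by ring
  have hbound2 : ∀ (k : ℕ) (y : ℝ), |y| ≤ 1 →
      ‖p k * ((k : ℝ) * (((k - 1 : ℕ) : ℝ) * y ^ (k - 1 - 1)))‖ ≤ (k : ℝ) ^ 3 * p k := by
    intro k y hy
    have h1 : |y| ^ (k - 1 - 1) ≤ 1 := pow_le_one₀ (abs_nonneg y) hy
    have h2 : (0:ℝ) ≤ |y| ^ (k - 1 - 1) := pow_nonneg (abs_nonneg y) _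
    have h3 : ((k - 1 : ℕ) : ℝ) ≤ (k : ℝ) := Nat.cast_le.2 (Nat.sub_le k 1)
    have h4 : (0:ℝ) ≤ ((k - 1 : ℕ) : ℝ) := Nat.cast_nonneg _
    have h5 : (0:ℝ) ≤ (k : ℝ) := Nat.cast_nonneg _
    have h6 : (k : ℝ) * ((k - 1 : ℕ) : ℝ) ≤ (k : ℝ) ^ 3 := by
      have : k * (k - 1) ≤ k ^ 3 := by
        rcases Nat.eq_zero_or_pos k with rfl | hk
        · simp
        · calc k * (k - 1) ≤ k * k := Nat.mul_le_mul_left k (Nat.sub_le k 1)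
            _ = k ^ 2 := (sq k).symm
            _ ≤ k ^ 3 := Nat.pow_le_pow_right hk (by norm_num)
      exact_mod_cast this
    rw [Real.norm_eq_abs, abs_mul, abs_mul, abs_mul, abs_pow, abs_of_nonneg (hp k),
      abs_of_nonneg h5, abs_of_nonneg h4]
    calc p k * ((k : ℝ) * (((k - 1 : ℕ) : ℝ) * |y| ^ (k - 1 - 1)))
        ≤ p k * ((k : ℝ) * (((k - 1 : ℕ) : ℝ) * 1)) :=
          mul_le_mul_of_nonneg_left
            (mul_le_mul_of_nonneg_left (mul_le_mul_of_nonneg_left h1 h4) h5) (hp k)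
      _ = p k * ((k : ℝ) * ((k - 1 : ℕ) : ℝ)) := by ring
      _ ≤ p k * (k : ℝ) ^ 3 := mul_le_mul_of_nonneg_left h6 (hp k)
      _ = (k : ℝ) ^ 3 * p k := by ring
  -- summability of the term series
  have hS0 : ∀ x : ℝ, |x| ≤ 1 → Summable (fun k : ℕ => p k * x ^ k) := by
    intro x hx
    refine Summable.of_norm_bounded hpS fun k => ?_
    rw [Real.norm_eq_abs, abs_mul, abs_pow, abs_of_nonneg (hp k)]
    exact mul_le_of_le_one_right (hp k) (pow_le_one₀ (abs_nonneg x) hx)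
  have hS1 : ∀ x : ℝ, |x| ≤ 1 → Summable (fun k : ℕ => p k * ((k : ℝ) * x ^ (k - 1))) :=
    fun x hx => Summable.of_norm_bounded hmS fun k => hbound1 k x hx
  have hS2 : ∀ x : ℝ, |x| ≤ 1 →
      Summable (fun k : ℕ => p k * ((k : ℝ) * (((k - 1 : ℕ) : ℝ) * x ^ (k - 1 - 1)))) :=
    fun x hx => Summable.of_norm_bounded hthird fun k => hbound2 k x hx
  have habs1 : ∀ x : ℝ, x ∈ Set.Ioo (-1 : ℝ) 1 → |x| ≤ 1 :=
    fun x hx => abs_le.2 ⟨hx.1.le, hx.2.le⟩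
  have habs1' : ∀ x : ℝ, 0 ≤ x → x ≤ 1 → |x| ≤ 1 := fun x h1 h2 => abs_le.2 ⟨by linarith, h2⟩
  -- f has derivative g on (-1,1)
  have hgD : ∀ x ∈ Set.Ioo (-1 : ℝ) 1, HasDerivAt f (g x) x := by
    intro x hx
    rw [hfF]
    exact hasDerivAt_tsum_of_isPreconnected hmS isOpen_Ioo
      (isPreconnected_Ioo)
      (fun k y _ => (hasDerivAt_pow k y).const_mul (p k))
      (fun k y hy => hbound1 k y (habs1 y hy))
      (show (0:ℝ) ∈ Set.Ioo (-1:ℝ) 1 by constructor <;> norm_num)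
      (hS0 0 (by simp)) hx
  -- g has derivative h2 on (-1,1)
  have hh2D : ∀ x ∈ Set.Ioo (-1 : ℝ) 1, HasDerivAt g (h2 x) x := by
    intro x hx
    exact hasDerivAt_tsum_of_isPreconnected hthird isOpen_Ioo
      (isPreconnected_Ioo)
      (fun k y _ => ((hasDerivAt_pow (k - 1) y).const_mul ((k : ℝ))).const_mul (p k))
      (fun k y hy => hbound2 k y (habs1 y hy))
      (show (0:ℝ) ∈ Set.Ioo (-1:ℝ) 1 by constructor <;> norm_num)
      (hS1 0 (by simp)) hx
  -- monotonicity of g and h2 on [0,1]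
  have hgmono : ∀ x y : ℝ, 0 ≤ x → x ≤ y → y ≤ 1 → g x ≤ g y := by
    intro x y hx hxy hy1
    refine Summable.tsum_le_tsum (fun k => ?_) (hS1 x (habs1' x hx (hxy.trans hy1)))
      (hS1 y (habs1' y (hx.trans hxy) hy1))
    have h1 : x ^ (k - 1) ≤ y ^ (k - 1) := pow_le_pow_left₀ hx hxy _
    exact mul_le_mul_of_nonneg_left
      (mul_le_mul_of_nonneg_left h1 (Nat.cast_nonneg k)) (hp k)
  have hh2mono : ∀ x y : ℝ, 0 ≤ x → x ≤ y → y ≤ 1 → h2 x ≤ h2 y := by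
    intro x y hx hxy hy1
    refine Summable.tsum_le_tsum (fun k => ?_) (hS2 x (habs1' x hx (hxy.trans hy1)))
      (hS2 y (habs1' y (hx.trans hxy) hy1))
    have h1 : x ^ (k - 1 - 1) ≤ y ^ (k - 1 - 1) := pow_le_pow_left₀ hx hxy _
    exact mul_le_mul_of_nonneg_left (mul_le_mul_of_nonneg_left
      (mul_le_mul_of_nonneg_left h1 (Nat.cast_nonneg _)) (Nat.cast_nonneg k)) (hp k)
  have hgnn : ∀ x : ℝ, 0 ≤ x → 0 ≤ g x := by
    intro x hx
    exact tsum_nonneg fun k => mul_nonneg (hp k)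
      (mul_nonneg (Nat.cast_nonneg _) (pow_nonneg hx _))
  have hh2nn : ∀ x : ℝ, 0 ≤ x → 0 ≤ h2 x := by
    intro x hx
    exact tsum_nonneg fun k => mul_nonneg (hp k)
      (mul_nonneg (Nat.cast_nonneg _) (mul_nonneg (Nat.cast_nonneg _) (pow_nonneg hx _)))
  -- f is monotone and nonnegative on [0,1], and maps [0,1) to [0,1)
  have hfnn : ∀ x : ℝ, 0 ≤ x → 0 ≤ f x := by
    intro x hx
    rw [hf]
    exact tsum_nonneg fun k => mul_nonneg (hp k) (pow_nonneg hx _)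
  have hfmono : ∀ x y : ℝ, 0 ≤ x → x ≤ y → y ≤ 1 → f x ≤ f y := by
    intro x y hx hxy hy1
    rw [hf, hf]
    refine Summable.tsum_le_tsum (fun k => ?_) (hS0 x (habs1' x hx (hxy.trans hy1)))
      (hS0 y (habs1' y (hx.trans hxy) hy1))
    exact mul_le_mul_of_nonneg_left (pow_le_pow_left₀ hx hxy _) (hp k)
  have hpshiftS : Summable (fun k : ℕ => p (k + 1)) := (summable_nat_add_iff 1).2 hpS
  have hqpos : 0 < ∑' k : ℕ, p (k + 1) := by
    rcases lt_or_eq_of_le (tsum_nonneg (fun k => hp (k + 1))) with h | h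
    · exact h
    · exfalso
      have hz : ∀ k : ℕ, p (k + 1) = 0 := by
        intro k
        have hle : p (k + 1) ≤ ∑' j : ℕ, p (j + 1) :=
          Summable.le_tsum hpshiftS k (fun j _ => hp (j + 1))
        have := hp (k + 1)
        linarith [h]
      have : ∀ k : ℕ, (k : ℝ) * p k = 0 := by
        intro k
        cases k with
        | zero => simp
        | succ j => simp [hz j]
      rw [tsum_congr this, tsum_zero] at hmean
      norm_num at hmean
  have hq1 : p 0 + ∑' k : ℕ, p (k + 1) = 1 := by
    rw [← Summable.tsum_eq_zero_add hpS]; exact hsum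
  have hflt : ∀ x : ℝ, 0 ≤ x → x < 1 → f x < 1 := by
    intro x hx hx1
    have hSx : Summable (fun k : ℕ => p k * x ^ k) := hS0 x (habs1' x hx hx1.le)
    have hSx' : Summable (fun k : ℕ => p (k + 1) * x ^ (k + 1)) :=
      (summable_nat_add_iff (f := fun k : ℕ => p k * x ^ k) 1).2 hSx
    have key : f x ≤ p 0 + (∑' k : ℕ, p (k + 1)) * x := by
      rw [hf, Summable.tsum_eq_zero_add hSx]
      simp only [pow_zero, mul_one]
      have : (∑' k : ℕ, p (k + 1)) * x = ∑' k : ℕ, p (k + 1) * x := by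
        rw [tsum_mul_right]
      rw [this]
      refine add_le_add_right (Summable.tsum_le_tsum (fun k => ?_) hSx' (hpshiftS.mul_right x)) _
      have : x ^ (k + 1) ≤ x ^ 1 := pow_le_pow_of_le_one hx hx1.le (by omega)
      rw [pow_one] at this
      exact mul_le_mul_of_nonneg_left this (hp (k + 1))
    nlinarith [hqpos]
  -- iterates of f at 0
  have ha : ∀ k : ℕ, 0 ≤ f^[k] 0 ∧ f^[k] 0 < 1 := by
    intro k
    induction k with
    | zero => simp
    | succ k ih =>
      rw [Function.iterate_succ_apply']
      exact ⟨hfnn _ ih.1, hflt _ ih.1 ih.2⟩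
  have hamono : Monotone (fun k : ℕ => f^[k] 0) := by
    apply monotone_nat_of_le_succ
    intro k
    induction k with
    | zero => simpa using hfnn 0 le_rfl
    | succ k ih =>
      rw [Function.iterate_succ_apply', Function.iterate_succ_apply']
      exact hfmono _ _ (ha k).1 ih (ha (k + 1)).2.le
  -- abbreviations
  set a : ℝ := f^[n - 1] 0 with hadef
  set b : ℝ := f^[m - 1] 0 with hbdef
  have hab : a ≤ b := hamono (by omega : n - 1 ≤ m - 1)
  have ha0 : 0 ≤ a := (ha (n - 1)).1
  have ha1 : a < 1 := (ha (n - 1)).2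
  have hb0 : 0 ≤ b := (ha (m - 1)).1
  have hb1 : b < 1 := (ha (m - 1)).2
  have haI : a ∈ Set.Ioo (-1 : ℝ) 1 := ⟨by linarith, ha1⟩
  have hbI : b ∈ Set.Ioo (-1 : ℝ) 1 := ⟨by linarith, hb1⟩
  have hderiva : ∀ x ∈ Set.Ioo (-1 : ℝ) 1, deriv f x = g x := fun x hx => (hgD x hx).deriv
  have hiter : iteratedDeriv 2 f a = h2 a := by
    have hev : deriv f =ᶠ[nhds a] g :=
      Filter.eventuallyEq_of_mem (isOpen_Ioo.mem_nhds haI) hderiva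
    rw [iteratedDeriv_succ, iteratedDeriv_one, hev.deriv_eq]
    exact (hh2D a haI).deriv
  have e2 : 1 - θ (n - 1) = a := by rw [hθ]; ring
  have e3 : 1 - θ (m - 1) = b := by rw [hθ]; ring
  have e1 : θ (n - 1) - θ (m - 1) = b - a := by rw [hθ, hθ]; ring
  have gab : deriv f a ≤ deriv f b := by
    rw [hderiva a haI, hderiva b hbI]; exact hgmono a b ha0 hab hb1.le
  have h0a : 0 ≤ deriv f a := by rw [hderiva a haI]; exact hgnn a ha0
  -- the mean value inequality
  have key : (b - a) * h2 a ≤ g b - g a := by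
    rcases eq_or_lt_of_le hab with h | h
    · rw [← h]; simp
    · have hcont : ContinuousOn g (Set.Icc a b) := by
        intro x hx
        have hxI : x ∈ Set.Ioo (-1 : ℝ) 1 := ⟨by linarith [hx.1], lt_of_le_of_lt hx.2 hb1⟩
        exact ((hh2D x hxI).continuousAt).continuousWithinAt
      have hder : ∀ x ∈ Set.Ioo a b, HasDerivAt g (h2 x) x := by
        intro x hx
        exact hh2D x ⟨by linarith [hx.1], by linarith [hx.2]⟩
      obtain ⟨c, hc, hceq⟩ := exists_hasDerivAt_eq_slope g h2 h hcont hder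
      have hc2 : h2 a ≤ h2 c := hh2mono a c ha0 hc.1.le (by linarith [hc.2])
      have hba : 0 < b - a := by linarith
      have : g b - g a = (b - a) * h2 c := by
        rw [hceq]; field_simp
      rw [this]
      exact mul_le_mul_of_nonneg_left hc2 hba.le
  -- the measure computation
  have hAsub : {ω | Nt n ω = 0} ⊆ {ω | Nt m ω = 0} := fun ω hω => habs ω n m hm hω
  have hAm : MeasurableSet {ω | Nt n ω = 0} := by
    have : {ω | Nt n ω = 0} = Nt n ⁻¹' {0} := by ext ω; simp
    rw [this]
    exact hmeas n (measurableSet_singleton 0)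
  have hsetEq : {ω | Nt n ω ≠ 0 ∧ Nt m ω = 0} = {ω | Nt m ω = 0} \ {ω | Nt n ω = 0} := by
    ext ω; simp only [Set.mem_setOf_eq, Set.mem_diff]; tauto
  have hμeq : μ {ω | Nt n ω ≠ 0 ∧ Nt m ω = 0}
      = ENNReal.ofReal (deriv f b) - ENNReal.ofReal (deriv f a) := by
    rw [hsetEq, measure_diff hAsub hAm.nullMeasurableSet (measure_ne_top μ _),
      hlaw n hn, hlaw m (hn.trans hm)]
  constructor
  · rw [hμeq, e2, e3, ← ENNReal.ofReal_sub _ h0a,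
      ENNReal.toReal_ofReal (by linarith)]
  · rw [e1, e2, e3, hiter, hderiva a haI, hderiva b hbI]
    exact key
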